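/- Let φ1, φ2, X1, X2 be positive reals with φ1·X2 > φ2·X1 and 1 − √(φ1·X1·X2/φ2) > X2 (interior of Case 3a). Define, for (b, v) near (0, 0), π1(b, v) = ((φ1 − v)/2)·(X1 + b) + (1/2)·√((X1 + b)·(X2 − b)·(φ1 − v)·(φ2 + v)) and π2(b, v) = ((φ2 + v)/2)·(X2 − b) + (1/2)·√((X1 + b)·(X2 − b)·(φ1 − v)·(φ2 + v)). Assume it is not the case that both φ1 = 3·φ2 and (φ1 − φ2)²·X2 = 4·φ1·φ2·X1. Then for every ε > 0 there exists a pair (b, v) with |b| < ε and |v| < ε such that π1(b, v) > π1(0, 0) and π2(b, v) > π2(0, 0). (Proposition 21: existence of mutually beneficial joint transfers in the interior of Case 3.) -/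

import Mathlib

open Filter Set

private lemma aux_pos_deriv {f : ℝ → ℝ} {c : ℝ} (hf : HasDerivAt f c 0) (hc : 0 < c) :
    ∀ᶠ t in nhdsWithin (0:ℝ) (Set.Ioi 0), f 0 < f t := by
  have h1 := hasDerivAt_iff_tendsto_slope.mp hf
  have h2 : ∀ᶠ t in nhdsWithin (0:ℝ) {(0:ℝ)}ᶜ, 0 < slope f 0 t :=
    h1.eventually (eventually_gt_nhds hc)
  have h3 : nhdsWithin (0:ℝ) (Set.Ioi 0) ≤ nhdsWithin (0:ℝ) {(0:ℝ)}ᶜ :=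
    nhdsWithin_mono 0 (fun x hx => ne_of_gt hx)
  filter_upwards [h3 h2, self_mem_nhdsWithin] with t ht ht0
  have ht0' : (0:ℝ) < t := ht0
  have hs : 0 < (f t - f 0) / (t - 0) := by simpa [slope_def_field] using ht
  have := mul_pos hs ht0'
  rw [sub_zero, div_mul_cancel₀ _ (ne_of_gt ht0')] at this
  linarith

theorem case3_joint_transfer (φ1 φ2 X1 X2 : ℝ)
    (hφ1 : 0 < φ1) (hφ2 : 0 < φ2) (hX1 : 0 < X1) (hX2 : 0 < X2)
    (hratio : φ1 * X2 > φ2 * X1)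
    (hcase : 1 - Real.sqrt (φ1 * X1 * X2 / φ2) > X2)
    (π1 π2 : ℝ → ℝ → ℝ)
    (hπ1 : ∀ b v, π1 b v = ((φ1 - v) / 2) * (X1 + b) +
      (1 / 2) * Real.sqrt ((X1 + b) * (X2 - b) * (φ1 - v) * (φ2 + v)))
    (hπ2 : ∀ b v, π2 b v = ((φ2 + v) / 2) * (X2 - b) +
      (1 / 2) * Real.sqrt ((X1 + b) * (X2 - b) * (φ1 - v) * (φ2 + v)))
    (hnd : ¬ (φ1 = 3 * φ2 ∧ (φ1 - φ2) ^ 2 * X2 = 4 * φ1 * φ2 * X1)) :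
    ∀ ε > (0 : ℝ), ∃ b v : ℝ,
      |b| < ε ∧ |v| < ε ∧
      π1 b v > π1 0 0 ∧ π2 b v > π2 0 0 := by
  intro ε hε
  set db := X1 + X2 with hdb
  set dv := φ1 + φ2 with hdv
  have hdb0 : 0 < db := by positivity
  have hdv0 : 0 < dv := by positivity
  set D := φ1 * X2 - φ2 * X1 with hD
  have hD0 : 0 < D := by rw [hD]; linarith
  set P : ℝ → ℝ := fun t => (X1 + t*db) * (X2 - t*db) * (φ1 - t*dv) * (φ2 + t*dv) with hP
  have hP0 : P 0 = X1 * X2 * (φ1 * φ2) := by simp [hP]; ring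
  have hP0pos : 0 < P 0 := by rw [hP0]; positivity
  set S0 := Real.sqrt (P 0) with hS0
  have hS0pos : 0 < S0 := Real.sqrt_pos.mpr hP0pos
  have hS0sq : S0 ^ 2 = P 0 := Real.sq_sqrt (le_of_lt hP0pos)
  set N := db * (X2 - X1) * (φ1*φ2) + dv * (X1*X2) * (φ1 - φ2) with hN
  -- derivative of P at 0
  have h1 : HasDerivAt (fun t : ℝ => X1 + t * db) db 0 := by
    simpa using ((hasDerivAt_id (0:ℝ)).mul_const db).const_add X1
  have h2 : HasDerivAt (fun t : ℝ => X2 - t * db) (-db) 0 := by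
    simpa using ((hasDerivAt_id (0:ℝ)).mul_const db).const_sub X2
  have h3 : HasDerivAt (fun t : ℝ => φ1 - t * dv) (-dv) 0 := by
    simpa using ((hasDerivAt_id (0:ℝ)).mul_const dv).const_sub φ1
  have h4 : HasDerivAt (fun t : ℝ => φ2 + t * dv) dv 0 := by
    simpa using ((hasDerivAt_id (0:ℝ)).mul_const dv).const_add φ2
  have hPderiv : HasDerivAt P N 0 := by
    have := ((h1.mul h2).mul h3).mul h4
    refine this.congr_deriv ?_
    simp [hN]
    ring
  have hPne : P 0 ≠ 0 := ne_of_gt hP0pos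
  have hsq : HasDerivAt (fun t => Real.sqrt (P t)) (N / (2 * S0)) 0 := by
    simpa [hS0] using hPderiv.sqrt hPne
  -- c value
  set c := D / 2 + N / (2 * S0) / 2 with hc
  have hNval : N = D * (φ1 * X1 + φ2 * X2) := by rw [hN, hD, hdb, hdv]; ring
  have hcpos : 0 < c := by
    rw [hc, hNval]
    positivity
  -- derivative of g1
  have hA1 : HasDerivAt (fun t : ℝ => (φ1 - t * dv) / 2) (-dv / 2) 0 := h3.div_const 2
  have hA2 : HasDerivAt (fun t : ℝ => (φ2 + t * dv) / 2) (dv / 2) 0 := h4.div_const 2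
  have hg1 : HasDerivAt (fun t : ℝ => ((φ1 - t*dv) / 2) * (X1 + t*db) +
      (1/2) * Real.sqrt (P t)) c 0 := by
    have := (hA1.mul h1).add (hsq.const_mul (1/2 : ℝ))
    refine this.congr_deriv ?_
    rw [hc, hD, hdb, hdv]
    ring
  have hg2 : HasDerivAt (fun t : ℝ => ((φ2 + t*dv) / 2) * (X2 - t*db) +
      (1/2) * Real.sqrt (P t)) c 0 := by
    have := (hA2.mul h2).add (hsq.const_mul (1/2 : ℝ))
    refine this.congr_deriv ?_
    rw [hc, hD, hdb, hdv]
    ring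
  have hfeq1 : (fun s : ℝ => π1 (s*db) (s*dv)) = (fun s : ℝ =>
      ((φ1 - s*dv) / 2) * (X1 + s*db) + (1/2) * Real.sqrt (P s)) := by
    funext s
    simp only [hπ1, hP]
  have hfeq2 : (fun s : ℝ => π2 (s*db) (s*dv)) = (fun s : ℝ =>
      ((φ2 + s*dv) / 2) * (X2 - s*db) + (1/2) * Real.sqrt (P s)) := by
    funext s
    simp only [hπ2, hP]
  have hg1' : HasDerivAt (fun s : ℝ => π1 (s*db) (s*dv)) c 0 := by
    rw [hfeq1]; exact hg1
  have hg2' : HasDerivAt (fun s : ℝ => π2 (s*db) (s*dv)) c 0 := by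
    rw [hfeq2]; exact hg2
  -- get a good t
  have hev1 := aux_pos_deriv hg1' hcpos
  have hev2 := aux_pos_deriv hg2' hcpos
  have hmem : Set.Ioo (0:ℝ) (ε / (db + dv)) ∈ nhdsWithin (0:ℝ) (Set.Ioi 0) :=
    Ioo_mem_nhdsGT_of_mem ⟨le_refl _, by positivity⟩
  have hall := (hev1.and hev2).and (eventually_of_mem hmem (fun x hx => hx))
  obtain ⟨t, ⟨⟨hgt1, hgt2⟩, ht0, htlt⟩⟩ := hall.exists
  refine ⟨t * db, t * dv, ?_, ?_, ?_, ?_⟩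
  · rw [abs_of_pos (by positivity)]
    calc t * db ≤ t * (db + dv) := by nlinarith
    _ < ε := by
      rw [lt_div_iff₀ (by positivity)] at htlt
      linarith
  · rw [abs_of_pos (by positivity)]
    calc t * dv ≤ t * (db + dv) := by nlinarith
    _ < ε := by
      rw [lt_div_iff₀ (by positivity)] at htlt
      linarith
  · simpa using hgt1
  · simpa using hgt2
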